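/- Let n ≥ 1 and let T : 𝔽_2^n → 𝔽_2^n be an affine bijection (T(x) = Λx + c with Λ ∈ GL_n(𝔽_2) and c ∈ 𝔽_2^n) such that gc_T := T^{-1} ∘ gc_n is a cyclic binary Gray code. Then T is a translation followed by a coordinate permutation: there exist a permutation σ of {0,…,n−1} and e ∈ 𝔽_2^n such that T(x) = (x + e)^σ for all x ∈ 𝔽_2^n. -/

import Mathlib

/-- `bin_n : ℤ/p^nℤ → 𝔽_p^n`, the vector of p-adic digits. -/
def binN (p n : ℕ) (i : ZMod (p ^ n)) : Fin n → ZMod p :=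
  fun ν => (((i.val / p ^ (ν : ℕ)) % p : ℕ) : ZMod p)

/-- Binary reflected Gray code via right shift: `x ↦ x + (x ▷ 1)`. -/
def gcBin (n : ℕ) (x : Fin n → ZMod 2) : Fin n → ZMod 2 :=
  fun i => x i + if h : (i : ℕ) + 1 < n then x ⟨(i : ℕ) + 1, h⟩ else 0

lemma key_div (P Q : ℕ) (hP : 1 ≤ P) (hQ : 1 ≤ Q) : (P * Q - 1) / P = Q - 1 := by
  have h2 : (Q - 1) * P = P * Q - P := by rw [Nat.sub_mul, one_mul, mul_comm]
  have h3 : P ≤ P * Q := Nat.le_mul_of_pos_right P hQ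
  have h5 : P * Q - 1 = (P - 1) + (Q - 1) * P := by omega
  have h6 : (P - 1) / P = 0 := Nat.div_eq_of_lt (by omega)
  rw [h5, Nat.add_mul_div_right _ _ (by omega : 0 < P), h6, zero_add]

lemma two_pow_sub_one_mod_two {m : ℕ} (hm : 1 ≤ m) : (2 ^ m - 1) % 2 = 1 := by
  have h : 2 ^ m = 2 * 2 ^ (m - 1) := by rw [← pow_succ']; congr 1; omega
  have h1 : 1 ≤ 2 ^ (m - 1) := Nat.one_le_two_pow
  generalize hB : 2 ^ (m - 1) = B at h h1
  generalize hA : 2 ^ m = A at h ⊢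
  omega

lemma two_pow_mod_two {m : ℕ} (hm : 1 ≤ m) : 2 ^ m % 2 = 0 := by
  have h : 2 ^ m = 2 * 2 ^ (m - 1) := by rw [← pow_succ']; congr 1; omega
  rw [h, Nat.mul_mod_right]

lemma aux_div_pow_sub_one (k ν : ℕ) : (2 ^ k - 1) / 2 ^ ν = 2 ^ (k - ν) - 1 := by
  rcases le_or_gt ν k with h | h
  · have h1 : 2 ^ k = 2 ^ ν * 2 ^ (k - ν) := by
      rw [← pow_add]; congr 1; omega
    rw [h1]
    exact key_div _ _ Nat.one_le_two_pow Nat.one_le_two_pow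
  · have h0 : k - ν = 0 := by omega
    have h2 : 2 ^ k < 2 ^ ν := Nat.pow_lt_pow_right (by norm_num) h
    have h6 : (2 ^ k - 1) / 2 ^ ν = 0 :=
      Nat.div_eq_of_lt (lt_of_le_of_lt (Nat.sub_le _ _) h2)
    rw [h0, h6, pow_zero]
    omega

lemma binN_pow_sub_one {n : ℕ} (k ν : Fin n) :
    binN 2 n (((2 ^ (k : ℕ) - 1 : ℕ)) : ZMod (2 ^ n)) ν
      = if (ν : ℕ) < (k : ℕ) then 1 else 0 := by
  haveI : NeZero (2 ^ n) := ⟨by positivity⟩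
  have hlt : 2 ^ (k : ℕ) - 1 < 2 ^ n :=
    lt_of_le_of_lt (Nat.sub_le _ _) (Nat.pow_lt_pow_right (by norm_num) k.isLt)
  unfold binN
  rw [ZMod.val_natCast, Nat.mod_eq_of_lt hlt, aux_div_pow_sub_one]
  rcases lt_or_ge (ν : ℕ) (k : ℕ) with h | h
  · have hm : 1 ≤ (k : ℕ) - ν := by omega
    have : (2 ^ ((k : ℕ) - ν) - 1) % 2 = 1 := two_pow_sub_one_mod_two hm
    simp [this, h]
  · have h0 : (k : ℕ) - ν = 0 := by omega
    simp [h0, h, Nat.not_lt.mpr h]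

lemma binN_pow {n : ℕ} (k ν : Fin n) :
    binN 2 n (((2 ^ (k : ℕ) : ℕ)) : ZMod (2 ^ n)) ν
      = if (ν : ℕ) = (k : ℕ) then 1 else 0 := by
  haveI : NeZero (2 ^ n) := ⟨by positivity⟩
  have hlt : 2 ^ (k : ℕ) < 2 ^ n := Nat.pow_lt_pow_right (by norm_num) k.isLt
  unfold binN
  rw [ZMod.val_natCast, Nat.mod_eq_of_lt hlt]
  rcases lt_trichotomy (ν : ℕ) (k : ℕ) with h | h | h
  · have hdiv : 2 ^ (k : ℕ) / 2 ^ (ν : ℕ) = 2 ^ ((k : ℕ) - ν) :=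
      Nat.pow_div (le_of_lt h) (by norm_num)
    have : 2 ^ ((k : ℕ) - ν) % 2 = 0 := two_pow_mod_two (by omega)
    simp [hdiv, this, Nat.ne_of_lt h]
  · have hdiv : 2 ^ (k : ℕ) / 2 ^ (ν : ℕ) = 1 := by
      rw [h, Nat.div_self (by positivity)]
    simp [hdiv, h]
  · have hdiv : 2 ^ (k : ℕ) / 2 ^ (ν : ℕ) = 0 :=
      Nat.div_eq_of_lt (Nat.pow_lt_pow_right (by norm_num) h)
    simp [hdiv, Nat.ne_of_gt h]

lemma gcBin_sub (n : ℕ) (a b : Fin n → ZMod 2) :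
    gcBin n a - gcBin n b = gcBin n (a - b) := by
  funext i
  simp only [Pi.sub_apply, gcBin]
  split <;> ring

lemma exists_single_of_hammingNorm_one {n : ℕ} (v : Fin n → ZMod 2)
    (h : hammingNorm v = 1) : ∃ j : Fin n, v = Pi.single j 1 := by
  unfold hammingNorm at h
  obtain ⟨j, hj⟩ := Finset.card_eq_one.mp h
  refine ⟨j, funext fun i => ?_⟩
  by_cases hij : i = j
  · subst hij
    have hmem : i ∈ Finset.univ.filter fun t => v t ≠ 0 := by
      rw [hj]; exact Finset.mem_singleton_self i
    have hv : v i ≠ 0 := (Finset.mem_filter.mp hmem).2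
    have : ∀ x : ZMod 2, x ≠ 0 → x = 1 := by decide
    simp [Pi.single_apply, this _ hv]
  · have hmem : i ∉ Finset.univ.filter fun t => v t ≠ 0 := by
      rw [hj]; simpa using hij
    have hv : v i = 0 := by
      by_contra hne
      exact hmem (Finset.mem_filter.mpr ⟨Finset.mem_univ i, hne⟩)
    simp [Pi.single_apply, hij, hv]

/-- if `T` is an affine bijection of `𝔽_2^n` such that
`gc_T = T⁻¹ ∘ gc_n` is a cyclic binary Gray code, then `T` is a translation followed by a
coordinate permutation: `T(x) = (x + e)^σ`. -/
theorem affine_gray_transform_is_permuted_translation (n : ℕ) (hn : 1 ≤ n)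
    (T Tinv : (Fin n → ZMod 2) → (Fin n → ZMod 2))
    (Λ : (Fin n → ZMod 2) ≃ₗ[ZMod 2] (Fin n → ZMod 2)) (c : Fin n → ZMod 2)
    (hT : ∀ x, T x = Λ x + c)
    (hTinv₁ : Function.LeftInverse Tinv T) (hTinv₂ : Function.RightInverse Tinv T)
    (hbij : Function.Bijective (Tinv ∘ gcBin n))
    (hGray : ∀ i : ZMod (2 ^ n),
      hammingDist ((Tinv ∘ gcBin n) (binN 2 n i)) ((Tinv ∘ gcBin n) (binN 2 n (i + 1))) = 1) :
    ∃ (σ : Equiv.Perm (Fin n)) (e : Fin n → ZMod 2),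
      ∀ x : Fin n → ZMod 2, T x = fun i => x (σ i) + e (σ i) := by
  haveI : NeZero (2 ^ n) := ⟨by positivity⟩
  have hzmod : ∀ x : ZMod 2, x + x = 0 := by decide
  -- Tinv is the inverse affine map
  have hTinv_eq : ∀ y, Tinv y = Λ.symm (y + c) := by
    intro y
    have h := hTinv₁ (Λ.symm (y + c))
    rw [hT, Λ.apply_symm_apply] at h
    have hy : y + c + c = y := by
      funext i; simp only [Pi.add_apply]; rw [add_assoc, hzmod, add_zero]
    rwa [hy] at h
  -- key:  Λ⁻¹ of each unit vector is a unit vector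
  have key : ∀ k : Fin n, ∃ j : Fin n, Λ.symm (Pi.single k 1) = Pi.single j 1 := by
    intro k
    have hd := hGray (((2 ^ (k : ℕ) - 1 : ℕ)) : ZMod (2 ^ n))
    have hplus : (((2 ^ (k : ℕ) - 1 : ℕ)) : ZMod (2 ^ n)) + 1
        = (((2 ^ (k : ℕ) : ℕ)) : ZMod (2 ^ n)) := by
      have h1 : (1 : ℕ) ≤ 2 ^ (k : ℕ) := Nat.one_le_two_pow
      rw [Nat.cast_sub h1]; push_cast; ring
    rw [hplus] at hd
    have ha : binN 2 n (((2 ^ (k : ℕ) - 1 : ℕ)) : ZMod (2 ^ n))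
        = fun ν : Fin n => if (ν : ℕ) < (k : ℕ) then 1 else 0 :=
      funext fun ν => binN_pow_sub_one k ν
    have hb : binN 2 n (((2 ^ (k : ℕ) : ℕ)) : ZMod (2 ^ n))
        = fun ν : Fin n => if (ν : ℕ) = (k : ℕ) then 1 else 0 :=
      funext fun ν => binN_pow k ν
    simp only [Function.comp_apply] at hd
    rw [ha, hb, hTinv_eq, hTinv_eq, hammingDist_eq_hammingNorm] at hd
    have hAB : ((fun ν : Fin n => if (ν : ℕ) < (k : ℕ) then (1 : ZMod 2) else 0)
        - fun ν : Fin n => if (ν : ℕ) = (k : ℕ) then 1 else 0)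
        = fun ν : Fin n => if (ν : ℕ) ≤ (k : ℕ) then 1 else 0 := by
      funext ν
      simp only [Pi.sub_apply]
      rcases lt_trichotomy (ν : ℕ) (k : ℕ) with h | h | h
      · rw [if_pos h, if_neg (Nat.ne_of_lt h), if_pos (le_of_lt h)]; decide
      · rw [if_neg (by omega : ¬ (ν : ℕ) < (k : ℕ)), if_pos h, if_pos (le_of_eq h)]; decide
      · rw [if_neg (by omega : ¬ (ν : ℕ) < (k : ℕ)), if_neg (Nat.ne_of_gt h),
          if_neg (Nat.not_le.mpr h)]; decide
    have hgcS : gcBin n (fun ν : Fin n => if (ν : ℕ) ≤ (k : ℕ) then (1 : ZMod 2) else 0)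
        = Pi.single k 1 := by
      funext i
      simp only [gcBin, Pi.single_apply]
      rcases lt_trichotomy ((i : ℕ)) ((k : ℕ)) with h | h | h
      · have hne : i ≠ k := fun he => absurd (congrArg Fin.val he) (Nat.ne_of_lt h)
        have hlt : (i : ℕ) + 1 < n := by
          have := k.isLt; omega
        rw [dif_pos hlt]
        simp only [le_of_lt h, if_pos, Nat.succ_le_of_lt h, if_neg hne]
        decide
      · have heq : i = k := Fin.ext h
        subst heq
        by_cases hlt : (i : ℕ) + 1 < n
        · rw [dif_pos hlt]
          have h2 : ¬ ((i : ℕ) + 1 ≤ (i : ℕ)) := by omega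
          simp [h2]
        · rw [dif_neg hlt]
          simp
      · have hne : i ≠ k := fun he => absurd (congrArg Fin.val he) (Nat.ne_of_gt h)
        have h1 : ¬ ((i : ℕ) ≤ (k : ℕ)) := Nat.not_le.mpr h
        by_cases hlt : (i : ℕ) + 1 < n
        · rw [dif_pos hlt]
          have h2 : ¬ ((i : ℕ) + 1 ≤ (k : ℕ)) := by omega
          simp [h1, h2, hne]
        · rw [dif_neg hlt]
          simp [h1, hne]
    have hdiff : Λ.symm ((gcBin n fun ν : Fin n => if (ν : ℕ) < (k : ℕ) then 1 else 0) + c)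
        - Λ.symm ((gcBin n fun ν : Fin n => if (ν : ℕ) = (k : ℕ) then 1 else 0) + c)
        = Λ.symm (Pi.single k 1) := by
      rw [← map_sub]
      congr 1
      have : ((gcBin n fun ν : Fin n => if (ν : ℕ) < (k : ℕ) then (1 : ZMod 2) else 0) + c)
          - ((gcBin n fun ν : Fin n => if (ν : ℕ) = (k : ℕ) then 1 else 0) + c)
          = (gcBin n fun ν : Fin n => if (ν : ℕ) < (k : ℕ) then 1 else 0)
            - gcBin n fun ν : Fin n => if (ν : ℕ) = (k : ℕ) then 1 else 0 := by ring
      rw [this, gcBin_sub, hAB, hgcS]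
    rw [neg_add_eq_sub, ← neg_sub, show ∀ v : Fin n → ZMod 2, -v = v from
      fun v => funext fun i => ZMod.neg_eq_self_mod_two (v i)] at hd
    rw [hdiff] at hd
    exact exists_single_of_hammingNorm_one _ hd
  choose π hπ using key
  have hinj : Function.Injective π := by
    intro k l hkl
    have h1 : Λ.symm (Pi.single k 1) = Λ.symm (Pi.single l 1) := by
      rw [hπ k, hπ l, hkl]
    have h2 : (Pi.single k 1 : Fin n → ZMod 2) = Pi.single l 1 := Λ.symm.injective h1
    by_contra hne
    have := congrFun h2 k
    simp [Pi.single_apply, hne] at this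
  let σ : Equiv.Perm (Fin n) := Equiv.ofBijective π (Finite.injective_iff_bijective.mp hinj)
  have hσ : ∀ k, Λ.symm (Pi.single k 1) = Pi.single (σ k) 1 := hπ
  have hΛ_single : ∀ j : Fin n, Λ (Pi.single j 1) = Pi.single (σ.symm j) 1 := by
    intro j
    have h := hσ (σ.symm j)
    rw [Equiv.apply_symm_apply] at h
    rw [← h, Λ.apply_symm_apply]
  have hfun : ∀ x, Λ x = fun i => x (σ i) := by
    have hlin : (Λ : (Fin n → ZMod 2) →ₗ[ZMod 2] (Fin n → ZMod 2))
        = LinearMap.funLeft (ZMod 2) (ZMod 2) σ := by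
      apply LinearMap.pi_ext'
      intro j
      refine LinearMap.ext fun r => ?_
      simp only [LinearMap.comp_apply, LinearMap.coe_single, LinearEquiv.coe_coe]
      have hr : (Pi.single j r : Fin n → ZMod 2) = r • Pi.single j 1 := by
        funext i; by_cases h : i = j <;> simp [Pi.single_apply, h]
      rw [hr, map_smul, map_smul, hΛ_single j]
      funext i
      simp only [Pi.smul_apply, LinearMap.funLeft_apply, Pi.single_apply, smul_eq_mul]
      congr 1
      by_cases h : i = σ.symm j
      · simp [h, Equiv.apply_symm_apply]
      · have h2 : σ i ≠ j := fun he => h (by rw [← he, Equiv.symm_apply_apply])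
        simp [h, h2]
    intro x
    exact LinearMap.congr_fun hlin x
  refine ⟨σ, fun j => c (σ.symm j), fun x => ?_⟩
  funext i
  rw [hT]
  simp only [Pi.add_apply, hfun x, Equiv.symm_apply_apply]
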